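/- Fix ε = 2^{-m} for some integer m ≥ 1 and suppose each rₙ = 2^{-jₙ} for some integer jₙ ≥ 1. For each dyadic square Δ of generation n with slit s(Δ) = {x}×[a,b] of length l = rₙ·2⁻ⁿ, define the ε-collar s^ε(Δ) = (x, x+εl) × [a,b]. Then for any two distinct dyadic squares Δ, Δ', the collars s^ε(Δ) and s^ε(Δ') are either disjoint or one is contained in the closure of the other. -/

import Mathlib

set_option maxHeartbeats 1000000


/-- The `ε`-collar of the slit of the dyadic square of generation `n` with indices
`i, j`: for the slit `{x} × [a,b]` of length `l = r n / 2ⁿ`, the collar is the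
rectangle `(x, x + εl) × [a,b]`. -/
noncomputable def collar (r : ℕ → ℝ) (ε : ℝ) (n i j : ℕ) : Set (ℝ × ℝ) :=
  Set.Ioo (((i : ℝ) + 1 / 2) / 2 ^ n)
      ((((i : ℝ) + 1 / 2) / 2 ^ n) + ε * (r n / 2 ^ n)) ×ˢ
    Set.Icc ((((j : ℝ) + 1 / 2) / 2 ^ n) - r n / 2 ^ (n + 1))
            ((((j : ℝ) + 1 / 2) / 2 ^ n) + r n / 2 ^ (n + 1))

lemma pow_split (a b c : ℕ) (h : b + c = a) : (2:ℝ)^a = 2^b * 2^c := by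
  rw [← pow_add]; congr 1; omega

lemma zpow_split (a b c : ℕ) (h : b + c = a) : (2:ℤ)^a = 2^b * 2^c := by
  rw [← pow_add]; congr 1; omega

lemma collar_eq (m jn n i j M : ℕ) (hn : n+1 ≤ M) (hw : m+jn+n ≤ M) (hl : jn+n+1 ≤ M)
    (ε : ℝ) (hε : ε = (2:ℝ)⁻¹^m) (r : ℕ → ℝ) (hrn : r n = (2:ℝ)⁻¹^jn) :
    collar r ε n i j =
      Set.Ioo ((((2*i+1) * 2^(M-n-1) : ℤ) : ℝ) * (2:ℝ)⁻¹^M)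
        ((((2*i+1) * 2^(M-n-1) + 2^(M-m-jn-n) : ℤ) : ℝ) * (2:ℝ)⁻¹^M) ×ˢ
      Set.Icc ((((2*j+1) * 2^(M-n-1) - 2^(M-jn-n-1) : ℤ) : ℝ) * (2:ℝ)⁻¹^M)
        ((((2*j+1) * 2^(M-n-1) + 2^(M-jn-n-1) : ℤ) : ℝ) * (2:ℝ)⁻¹^M) := by
  have e1 : ∀ k : ℕ, ((k:ℝ) + 1/2)/2^n = (((2*k+1) * 2^(M-n-1) : ℤ) : ℝ) * (2:ℝ)⁻¹^M := by
    intro k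
    push_cast
    rw [inv_pow, pow_split M (n+1) (M-n-1) (by omega)]
    field_simp
    ring
  have e2 : ε * (r n / 2^n) = (((2:ℤ)^(M-m-jn-n) : ℤ) : ℝ) * (2:ℝ)⁻¹^M := by
    rw [hε, hrn]
    push_cast
    rw [inv_pow, inv_pow, inv_pow, pow_split M (m+jn+n) (M-m-jn-n) (by omega),
      pow_split (m+jn+n) m (jn+n) (by omega), pow_split (jn+n) jn n (by omega)]
    field_simp
  have e3 : r n / 2^(n+1) = (((2:ℤ)^(M-jn-n-1) : ℤ) : ℝ) * (2:ℝ)⁻¹^M := by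
    rw [hrn]
    push_cast
    rw [inv_pow, inv_pow, pow_split M (jn+n+1) (M-jn-n-1) (by omega),
      pow_split (jn+n+1) jn (n+1) (by omega)]
    field_simp
  unfold collar
  rw [e1 i, e1 j]
  push_cast [e2, e3]
  ring_nf

lemma casted_le (p q : ℤ) (d : ℝ) (hd : 0 < d) (h : p ≤ q) : (p:ℝ)*d ≤ (q:ℝ)*d :=
  mul_le_mul_of_nonneg_right (by exact_mod_cast h) hd.le

lemma casted_lt (p q : ℤ) (d : ℝ) (hd : 0 < d) (h : p < q) : (p:ℝ)*d < (q:ℝ)*d :=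
  mul_lt_mul_of_pos_right (by exact_mod_cast h) hd

lemma disj_fst (p q p' q' : ℤ) (T T' : Set ℝ) (d : ℝ) (hd : 0 < d) (h : q ≤ p') :
    Disjoint (Set.Ioo ((p:ℝ)*d) ((q:ℝ)*d) ×ˢ T) (Set.Ioo ((p':ℝ)*d) ((q':ℝ)*d) ×ˢ T') := by
  apply Set.Disjoint.set_prod_left
  rw [Set.disjoint_left]
  rintro x ⟨h1, h2⟩ ⟨h3, h4⟩
  have := casted_le q p' d hd h
  linarith

lemma disj_snd (p q p' q' : ℤ) (S S' : Set ℝ) (d : ℝ) (hd : 0 < d) (h : q < p') :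
    Disjoint (S ×ˢ Set.Icc ((p:ℝ)*d) ((q:ℝ)*d)) (S' ×ˢ Set.Icc ((p':ℝ)*d) ((q':ℝ)*d)) := by
  apply Set.Disjoint.set_prod_right
  rw [Set.disjoint_left]
  rintro x ⟨h1, h2⟩ ⟨h3, h4⟩
  have := casted_lt q p' d hd h
  linarith

lemma subset_closure_lemma (a b c e a' b' c' e' : ℤ) (d : ℝ) (hd : 0 < d) (hab : a < b)
    (h1 : a ≤ a') (h2 : b' ≤ b) (h3 : c ≤ c') (h4 : e' ≤ e) :
    Set.Ioo ((a':ℝ)*d) ((b':ℝ)*d) ×ˢ Set.Icc ((c':ℝ)*d) ((e':ℝ)*d) ⊆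
      closure (Set.Ioo ((a:ℝ)*d) ((b:ℝ)*d) ×ˢ Set.Icc ((c:ℝ)*d) ((e:ℝ)*d)) := by
  rw [closure_prod_eq, closure_Ioo (ne_of_lt (casted_lt a b d hd hab)), closure_Icc]
  exact Set.prod_mono
    (Set.Ioo_subset_Icc_self.trans (Set.Icc_subset_Icc (casted_le a a' d hd h1)
      (casted_le b' b d hd h2)))
    (Set.Icc_subset_Icc (casted_le c c' d hd h3) (casted_le e' e d hd h4))


lemma odd_pos_of (c D : ℤ) (hD : 0 < D) (hodd : Odd c) (h : -D < c * D) : 1 ≤ c := by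
  have h1 : (-1) * D < c * D := by linarith
  have h2 : (-1 : ℤ) < c := lt_of_mul_lt_mul_right h1 hD.le
  rw [Int.odd_iff] at hodd
  omega

/-- Core integer inequality lemma for the case `n < n'`, with `M = m+jn+jn'+n'+1`. -/
lemma core (m jn jn' n i j n' i' j' : ℕ) (hm : 1 ≤ m) (hjn : 1 ≤ jn) (hjn' : 1 ≤ jn')
    (hnn : n < n') (M : ℕ) (hM : M = m + jn + jn' + n' + 1) :
    ((2*(i:ℤ)+1) * 2^(M-n-1) + 2^(M-m-jn-n) ≤ (2*(i':ℤ)+1) * 2^(M-n'-1)) ∨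
    ((2*(i':ℤ)+1) * 2^(M-n'-1) + 2^(M-m-jn'-n') ≤ (2*(i:ℤ)+1) * 2^(M-n-1)) ∨
    ((2*(j:ℤ)+1) * 2^(M-n-1) + 2^(M-jn-n-1) < (2*(j':ℤ)+1) * 2^(M-n'-1) - 2^(M-jn'-n'-1)) ∨
    ((2*(j':ℤ)+1) * 2^(M-n'-1) + 2^(M-jn'-n'-1) < (2*(j:ℤ)+1) * 2^(M-n-1) - 2^(M-jn-n-1)) ∨
    ((2*(i:ℤ)+1) * 2^(M-n-1) ≤ (2*(i':ℤ)+1) * 2^(M-n'-1)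
      ∧ (2*(i':ℤ)+1) * 2^(M-n'-1) + 2^(M-m-jn'-n') ≤ (2*(i:ℤ)+1) * 2^(M-n-1) + 2^(M-m-jn-n)
      ∧ (2*(j:ℤ)+1) * 2^(M-n-1) - 2^(M-jn-n-1) ≤ (2*(j':ℤ)+1) * 2^(M-n'-1) - 2^(M-jn'-n'-1)
      ∧ (2*(j':ℤ)+1) * 2^(M-n'-1) + 2^(M-jn'-n'-1) ≤ (2*(j:ℤ)+1) * 2^(M-n-1) + 2^(M-jn-n-1)) := by
  obtain ⟨k, hk⟩ : ∃ k, k = n' - n := ⟨_, rfl⟩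
  have hk1 : 1 ≤ k := by omega
  -- rewrite all exponents
  have r1 : (2:ℤ)^(M-n-1) = 2^k * 2^(m+jn+jn') := zpow_split _ _ _ (by omega)
  have r2 : (M - n' - 1) = m+jn+jn' := by omega
  have r3 : (M-m-jn-n) = jn'+k+1 := by omega
  have r4 : (M-m-jn'-n') = jn+1 := by omega
  have r5 : (M-jn-n-1) = m+jn'+k := by omega
  have r6 : (M-jn'-n'-1) = m+jn := by omega
  rw [r1, r2, r3, r4, r5, r6]
  have h2K : (0:ℤ) < 2^(m+jn+jn') := by positivity
  by_cases hx1 : (2*(i:ℤ)+1) * (2^k * 2^(m+jn+jn')) + 2^(jn'+k+1) ≤ (2*(i':ℤ)+1) * 2^(m+jn+jn')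
  · exact Or.inl hx1
  by_cases hx2 : (2*(i':ℤ)+1) * 2^(m+jn+jn') + 2^(jn+1) ≤ (2*(i:ℤ)+1) * (2^k * 2^(m+jn+jn'))
  · exact Or.inr (Or.inl hx2)
  push_neg at hx1 hx2
  -- x direction analysis
  obtain ⟨t, htdef⟩ : ∃ t : ℤ, t = (2*(i':ℤ)+1) - (2*(i:ℤ)+1)*2^k := ⟨_, rfl⟩
  have ht : (2*(i':ℤ)+1) * 2^(m+jn+jn') =
      (2*(i:ℤ)+1) * (2^k * 2^(m+jn+jn')) + t * 2^(m+jn+jn') := by rw [htdef]; ring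
  have hktwo : (2:ℤ)^k = 2 * 2^(k-1) := by
    rw [zpow_split k 1 (k-1) (by omega)]; norm_num
  have hoddt : Odd t := by
    rw [htdef]
    exact Odd.sub_even ⟨(i':ℤ), by ring⟩ (Even.mul_left ⟨2^(k-1), by rw [hktwo]; ring⟩ _)
  -- t ≥ 1
  have hWden : (2:ℤ)^(jn+1) ≤ 2^(m+jn+jn'-1) := pow_le_pow_right₀ one_le_two (by omega)
  have hEhalf : (2:ℤ)^(m+jn+jn') = 2^(m+jn+jn'-1) + 2^(m+jn+jn'-1) := by
    rw [zpow_split (m+jn+jn') (m+jn+jn'-1) 1 (by omega)]; ring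
  have hEpos : (0:ℤ) < 2^(m+jn+jn'-1) := by positivity
  have ht1 : 1 ≤ t := by
    apply odd_pos_of t _ h2K hoddt
    linarith [hx2, ht, hWden, hEhalf, hEpos]
  have htK1 : 1 * 2^(m+jn+jn') ≤ t * 2^(m+jn+jn') := mul_le_mul_of_nonneg_right ht1 h2K.le
  rw [one_mul] at htK1
  have hxle : (2*(i:ℤ)+1) * (2^k * 2^(m+jn+jn')) ≤ (2*(i':ℤ)+1) * 2^(m+jn+jn') := by
    linarith [ht, htK1]
  -- (★)  m + jn ≤ k
  have hstar : m + jn ≤ k := by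
    have htK : t * 2^(m+jn+jn') < 2^(jn'+k+1) := by linarith [ht, hx1]
    have h2 : (2:ℤ)^(m+jn+jn') < 2^(jn'+k+1) := lt_of_le_of_lt htK1 htK
    have := (pow_lt_pow_iff_right₀ one_lt_two).mp h2
    omega
  -- conj 2 : A' + W' ≤ A + W
  have hWsplit : (2:ℤ)^(jn'+k+1) = 2^(jn'+k+1-(m+jn+jn')) * 2^(m+jn+jn') :=
    zpow_split _ _ _ (by omega)
  have htlt : t < 2^(jn'+k+1-(m+jn+jn')) := by
    have htK : t * 2^(m+jn+jn') < 2^(jn'+k+1-(m+jn+jn')) * 2^(m+jn+jn') := by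
      rw [← hWsplit]; linarith [ht, hx1]
    exact lt_of_mul_lt_mul_right htK h2K.le
  have hconj2 : (2*(i':ℤ)+1) * 2^(m+jn+jn') + 2^(jn+1) ≤
      (2*(i:ℤ)+1) * (2^k * 2^(m+jn+jn')) + 2^(jn'+k+1) := by
    have h5 : (t+1) * 2^(m+jn+jn') ≤ 2^(jn'+k+1-(m+jn+jn')) * 2^(m+jn+jn') :=
      mul_le_mul_of_nonneg_right (by omega) h2K.le
    rw [add_mul, one_mul] at h5
    rw [hWsplit]
    linarith [ht, h5, hWden, hEhalf]
  -- y direction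
  by_cases hy1 : (2*(j:ℤ)+1) * (2^k * 2^(m+jn+jn')) + 2^(m+jn'+k) <
      (2*(j':ℤ)+1) * 2^(m+jn+jn') - 2^(m+jn)
  · exact Or.inr (Or.inr (Or.inl hy1))
  by_cases hy2 : (2*(j':ℤ)+1) * 2^(m+jn+jn') + 2^(m+jn) <
      (2*(j:ℤ)+1) * (2^k * 2^(m+jn+jn')) - 2^(m+jn'+k)
  · exact Or.inr (Or.inr (Or.inr (Or.inl hy2)))
  push_neg at hy1 hy2
  obtain ⟨u, hudef⟩ : ∃ u : ℤ, u = (2*(j':ℤ)+1) - (2*(j:ℤ)+1)*2^k := ⟨_, rfl⟩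
  have hu : (2*(j':ℤ)+1) * 2^(m+jn+jn') =
      (2*(j:ℤ)+1) * (2^k * 2^(m+jn+jn')) + u * 2^(m+jn+jn') := by rw [hudef]; ring
  have hoddu : Odd u := by
    rw [hudef]
    exact Odd.sub_even ⟨(j':ℤ), by ring⟩ (Even.mul_left ⟨2^(k-1), by rw [hktwo]; ring⟩ _)
  -- Λ as a multiple of 2^(m+jn+jn') : exponent g = k - jn ≥ m ≥ 1
  have hgsplit : (2:ℤ)^(m+jn'+k) = 2^(k-jn) * 2^(m+jn+jn') := zpow_split _ _ _ (by omega)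
  have hgeven : Even ((2:ℤ)^(k-jn)) := by
    refine ⟨2^(k-jn-1), ?_⟩
    rw [zpow_split (k-jn) 1 (k-jn-1) (by omega)]; ring
  have hL'small : (2:ℤ)^(m+jn) ≤ 2^(m+jn+jn'-1) := pow_le_pow_right₀ one_le_two (by omega)
  have hL'pos : (0:ℤ) < 2^(m+jn) := by positivity
  -- conj 4 : B' + Λ' ≤ B + Λ
  have hc1odd : Odd ((2:ℤ)^(k-jn) - u) := Even.sub_odd hgeven hoddu
  have hc1 : 1 ≤ (2:ℤ)^(k-jn) - u := by
    apply odd_pos_of _ _ h2K hc1odd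
    have expand : ((2:ℤ)^(k-jn) - u) * 2^(m+jn+jn') =
        2^(k-jn) * 2^(m+jn+jn') - u * 2^(m+jn+jn') := by ring
    rw [expand, ← hgsplit]
    linarith [hy1, hu, hL'small, hEhalf, hL'pos]
  have hconj4 : (2*(j':ℤ)+1) * 2^(m+jn+jn') + 2^(m+jn) ≤
      (2*(j:ℤ)+1) * (2^k * 2^(m+jn+jn')) + 2^(m+jn'+k) := by
    have h5 : 1 * 2^(m+jn+jn') ≤ ((2:ℤ)^(k-jn) - u) * 2^(m+jn+jn') :=
      mul_le_mul_of_nonneg_right hc1 h2K.le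
    rw [one_mul, sub_mul] at h5
    rw [hgsplit]
    linarith [hu, h5, hL'small, hEhalf, hL'pos]
  -- conj 3 : B - Λ ≤ B' - Λ'
  have hc2odd : Odd (u + (2:ℤ)^(k-jn)) := Odd.add_even hoddu hgeven
  have hc2 : 1 ≤ u + (2:ℤ)^(k-jn) := by
    apply odd_pos_of _ _ h2K hc2odd
    have expand : (u + (2:ℤ)^(k-jn)) * 2^(m+jn+jn') =
        u * 2^(m+jn+jn') + 2^(k-jn) * 2^(m+jn+jn') := by ring
    rw [expand, ← hgsplit]
    linarith [hy2, hu, hL'small, hEhalf, hL'pos]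
  have hconj3 : (2*(j:ℤ)+1) * (2^k * 2^(m+jn+jn')) - 2^(m+jn'+k) ≤
      (2*(j':ℤ)+1) * 2^(m+jn+jn') - 2^(m+jn) := by
    have h5 : 1 * 2^(m+jn+jn') ≤ (u + (2:ℤ)^(k-jn)) * 2^(m+jn+jn') :=
      mul_le_mul_of_nonneg_right hc2 h2K.le
    rw [one_mul, add_mul] at h5
    rw [hgsplit]
    linarith [hu, h5, hL'small, hEhalf, hL'pos]
  exact Or.inr (Or.inr (Or.inr (Or.inr ⟨hxle, hconj2, hconj3, hconj4⟩)))


/-- Core integer lemma for the case `n = n'` (same generation, same `jn`). -/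
lemma core_eq (m jn n i j i' j' : ℕ) (hm : 1 ≤ m) (hjn : 1 ≤ jn)
    (hne : ¬(i = i' ∧ j = j')) (M : ℕ) (hM : M = m + 2*jn + n + 1) :
    ((2*(i:ℤ)+1) * 2^(M-n-1) + 2^(M-m-jn-n) ≤ (2*(i':ℤ)+1) * 2^(M-n-1)) ∨
    ((2*(i':ℤ)+1) * 2^(M-n-1) + 2^(M-m-jn-n) ≤ (2*(i:ℤ)+1) * 2^(M-n-1)) ∨
    ((2*(j:ℤ)+1) * 2^(M-n-1) + 2^(M-jn-n-1) < (2*(j':ℤ)+1) * 2^(M-n-1) - 2^(M-jn-n-1)) ∨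
    ((2*(j':ℤ)+1) * 2^(M-n-1) + 2^(M-jn-n-1) < (2*(j:ℤ)+1) * 2^(M-n-1) - 2^(M-jn-n-1)) := by
  have r1 : (M-n-1) = m + 2*jn := by omega
  have r2 : (M-m-jn-n) = jn+1 := by omega
  have r3 : (M-jn-n-1) = m+jn := by omega
  rw [r1, r2, r3]
  have hP : (0:ℤ) < 2^(m+2*jn) := by positivity
  have hW : (2:ℤ)^(jn+1) ≤ 2^(m+2*jn) := pow_le_pow_right₀ one_le_two (by omega)
  have hL : (2:ℤ)^(m+jn) * 2 ≤ 2^(m+2*jn) := by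
    rw [show (2:ℤ)^(m+jn) * 2 = 2^(m+jn+1) from by rw [pow_succ]]
    exact pow_le_pow_right₀ one_le_two (by omega)
  have hLpos : (0:ℤ) < 2^(m+jn) := by positivity
  rcases Nat.lt_or_ge i i' with hii | hii
  · refine Or.inl ?_
    have h2 : ((2*(i:ℤ)+1) + 2) * 2^(m+2*jn) ≤ (2*(i':ℤ)+1) * 2^(m+2*jn) := by
      apply mul_le_mul_of_nonneg_right _ hP.le
      have : (i:ℤ) + 1 ≤ (i':ℤ) := by exact_mod_cast hii
      linarith
    rw [add_mul] at h2
    have : (2:ℤ) * 2^(m+2*jn) = 2^(m+2*jn) + 2^(m+2*jn) := by ring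
    linarith [this ▸ h2, hW]
  rcases Nat.lt_or_ge i' i with hii' | hii'
  · refine Or.inr (Or.inl ?_)
    have h2 : ((2*(i':ℤ)+1) + 2) * 2^(m+2*jn) ≤ (2*(i:ℤ)+1) * 2^(m+2*jn) := by
      apply mul_le_mul_of_nonneg_right _ hP.le
      have : (i':ℤ) + 1 ≤ (i:ℤ) := by exact_mod_cast hii'
      linarith
    rw [add_mul] at h2
    linarith [hW]
  have hii2 : i = i' := by omega
  have hjj : j ≠ j' := fun hjj => hne ⟨hii2, hjj⟩
  have hLstrict : (2:ℤ)^(m+jn) < 2^(m+2*jn) := pow_lt_pow_right₀ one_lt_two (by omega)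
  rcases Nat.lt_or_ge j j' with hjj1 | hjj1
  · refine Or.inr (Or.inr (Or.inl ?_))
    have h2 : ((2*(j:ℤ)+1) + 2) * 2^(m+2*jn) ≤ (2*(j':ℤ)+1) * 2^(m+2*jn) := by
      apply mul_le_mul_of_nonneg_right _ hP.le
      have : (j:ℤ) + 1 ≤ (j':ℤ) := by exact_mod_cast hjj1
      linarith
    rw [add_mul] at h2
    nlinarith [hL, hLstrict, hLpos]
  · have hjj2 : j' < j := by omega
    refine Or.inr (Or.inr (Or.inr ?_))
    have h2 : ((2*(j':ℤ)+1) + 2) * 2^(m+2*jn) ≤ (2*(j:ℤ)+1) * 2^(m+2*jn) := by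
      apply mul_le_mul_of_nonneg_right _ hP.le
      have : (j':ℤ) + 1 ≤ (j:ℤ) := by exact_mod_cast hjj2
      linarith
    rw [add_mul] at h2
    nlinarith [hL, hLstrict, hLpos]


lemma main_lt (m jn jn' n i j n' i' j' : ℕ) (hm : 1 ≤ m) (hjn : 1 ≤ jn) (hjn' : 1 ≤ jn')
    (hnn : n < n') (ε : ℝ) (hε : ε = (2:ℝ)⁻¹^m) (r : ℕ → ℝ)
    (hrn : r n = (2:ℝ)⁻¹^jn) (hrn' : r n' = (2:ℝ)⁻¹^jn') :
    Disjoint (collar r ε n i j) (collar r ε n' i' j') ∨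
      collar r ε n' i' j' ⊆ closure (collar r ε n i j) := by
  have hd : (0:ℝ) < (2:ℝ)⁻¹^(m + jn + jn' + n' + 1) := by positivity
  rw [collar_eq m jn n i j (m + jn + jn' + n' + 1) (by omega) (by omega) (by omega) ε hε r hrn,
      collar_eq m jn' n' i' j' (m + jn + jn' + n' + 1) (by omega) (by omega) (by omega) ε hε r hrn']
  rcases core m jn jn' n i j n' i' j' hm hjn hjn' hnn (m + jn + jn' + n' + 1) rfl
    with h | h | h | h | ⟨h1, h2, h3, h4⟩
  · exact Or.inl (disj_fst _ _ _ _ _ _ _ hd h)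
  · exact Or.inl ((disj_fst _ _ _ _ _ _ _ hd h).symm)
  · exact Or.inl (disj_snd _ _ _ _ _ _ _ hd h)
  · exact Or.inl ((disj_snd _ _ _ _ _ _ _ hd h).symm)
  · refine Or.inr (subset_closure_lemma _ _ _ _ _ _ _ _ _ hd ?_ h1 h2 h3 h4)
    have : (0:ℤ) < 2^(m + jn + jn' + n' + 1 - m - jn - n) := by positivity
    omega

lemma main_eq (m jn n i j i' j' : ℕ) (hm : 1 ≤ m) (hjn : 1 ≤ jn)
    (hne : ¬(i = i' ∧ j = j')) (ε : ℝ) (hε : ε = (2:ℝ)⁻¹^m) (r : ℕ → ℝ)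
    (hrn : r n = (2:ℝ)⁻¹^jn) :
    Disjoint (collar r ε n i j) (collar r ε n i' j') := by
  have hd : (0:ℝ) < (2:ℝ)⁻¹^(m + 2*jn + n + 1) := by positivity
  rw [collar_eq m jn n i j (m + 2*jn + n + 1) (by omega) (by omega) (by omega) ε hε r hrn,
      collar_eq m jn n i' j' (m + 2*jn + n + 1) (by omega) (by omega) (by omega) ε hε r hrn]
  rcases core_eq m jn n i j i' j' hm hjn hne (m + 2*jn + n + 1) rfl with h | h | h | h
  · exact disj_fst _ _ _ _ _ _ _ hd h
  · exact (disj_fst _ _ _ _ _ _ _ hd h).symm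
  · exact disj_snd _ _ _ _ _ _ _ hd h
  · exact (disj_snd _ _ _ _ _ _ _ hd h).symm


/-- If `ε = 2⁻ᵐ` and every `rₙ = 2⁻ʲⁿ` is a negative power of two, then the
`ε`-collars of any two distinct dyadic slits are either disjoint, or one is
contained in the closure of the other. -/
theorem stmt_12 (m : ℕ) (hm : 1 ≤ m) (ε : ℝ) (hε : ε = (2 : ℝ)⁻¹ ^ m)
    (r : ℕ → ℝ) (hr : ∀ n, ∃ jn : ℕ, 1 ≤ jn ∧ r n = (2 : ℝ)⁻¹ ^ jn)
    (n i j n' i' j' : ℕ) (hi : i < 2 ^ n) (hj : j < 2 ^ n)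
    (hi' : i' < 2 ^ n') (hj' : j' < 2 ^ n')
    (hne : (n, i, j) ≠ (n', i', j')) :
    Disjoint (collar r ε n i j) (collar r ε n' i' j') ∨
      collar r ε n i j ⊆ closure (collar r ε n' i' j') ∨
      collar r ε n' i' j' ⊆ closure (collar r ε n i j) := by
  obtain ⟨jn, hjn, hrn⟩ := hr n
  obtain ⟨jn', hjn', hrn'⟩ := hr n'
  rcases lt_trichotomy n n' with h | h | h
  · rcases main_lt m jn jn' n i j n' i' j' hm hjn hjn' h ε hε r hrn hrn' with d | c
    · exact Or.inl d
    · exact Or.inr (Or.inr c)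
  · subst h
    have hne' : ¬(i = i' ∧ j = j') := by
      rintro ⟨rfl, rfl⟩; exact hne rfl
    exact Or.inl (main_eq m jn n i j i' j' hm hjn hne' ε hε r hrn)
  · rcases main_lt m jn' jn n' i' j' n i j hm hjn' hjn h ε hε r hrn' hrn with d | c
    · exact Or.inl d.symm
    · exact Or.inr (Or.inl c)
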